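/- arXiv:1707.00635 — 3 statements merged into one kernel-verified Lean document; each statement's English description precedes it below -/
import Mathlib

section
/- Let L/K be an extension of finite fields and let χ : Lˣ → ℂˣ be a character (a group homomorphism). Let K[χ] denote the stabilizer field of χ, i.e. the fixed field in L of the stabilizer of χ in Gal(L/K) under the action σ·χ = χ ∘ σ. Then there exists a unique character χ_reg : K[χ]ˣ → ℂˣ such that χ = χ_reg ∘ N_{L/K[χ]} and χ_reg is K-regular, i.e. the stabilizer of χ_reg in Gal(K[χ]/K) under the action σ·χ_reg = χ_reg ∘ σ is trivial. -/
/-- The stabilizer of a character `χ : Lˣ → ℂˣ` under the precomposition action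
`σ · χ = χ ∘ σ` of `Gal(L/K)`, as a subgroup of `L ≃ₐ[K] L`. -/
def charStab (K L : Type) [Field K] [Field L] [Algebra K L] (χ : Lˣ →* ℂˣ) :
    Subgroup (L ≃ₐ[K] L) where
  carrier := {σ | ∀ x : Lˣ, χ (Units.map (σ : L →* L) x) = χ x}
  one_mem' := fun x => by
    have h : Units.map ((1 : L ≃ₐ[K] L) : L →* L) x = x := by ext; simp
    rw [h]
  mul_mem' := fun {σ τ} hσ hτ x => by
    have h : Units.map ((σ * τ : L ≃ₐ[K] L) : L →* L) x
        = Units.map (σ : L →* L) (Units.map (τ : L →* L) x) := by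
      ext; simp
    rw [h, hσ, hτ]
  inv_mem' := fun {σ} hσ x => by
    have h := hσ (Units.map ((σ⁻¹ : L ≃ₐ[K] L) : L →* L) x)
    have h2 : Units.map (σ : L →* L) (Units.map ((σ⁻¹ : L ≃ₐ[K] L) : L →* L) x) = x := by
      ext
      show (σ * σ⁻¹) (x : L) = (x : L)
      rw [mul_inv_cancel, AlgEquiv.one_apply]
    rw [h2] at h
    exact h.symm

/-- The stabilizer field `K[χ]` of a character `χ : Lˣ → ℂˣ`: the fixed field in `L`
of the stabilizer of `χ` in `Gal(L/K)` under the action `σ · χ = χ ∘ σ`. -/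
def stabField (K L : Type) [Field K] [Field L] [Algebra K L] (χ : Lˣ →* ℂˣ) :
    IntermediateField K L :=
  IntermediateField.fixedField (charStab K L χ)


lemma geom_nat (Q n : ℕ) (hQ : 1 ≤ Q) :
    (Q - 1) * (∑ i ∈ Finset.range n, Q ^ i) + 1 = Q ^ n := by
  obtain ⟨q, rfl⟩ : ∃ q, Q = q + 1 := ⟨Q - 1, by omega⟩
  simp only [Nat.add_sub_cancel]
  induction n with
  | zero => simp
  | succ n ih =>
    rw [Finset.sum_range_succ, Nat.mul_add, pow_succ]
    nlinarith [ih]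

lemma exists_frob (K L : Type*) [Field K] [Field L] [Finite L] [Algebra K L]
    (p m : ℕ) [Fact p.Prime] [CharP L p]
    (hfix : ∀ a : K, algebraMap K L a ^ p ^ m = algebraMap K L a) :
    ∃ φ : L ≃ₐ[K] L, ∀ x : L, φ x = x ^ p ^ m := by
  let A : L →ₐ[K] L :=
    { toRingHom := iterateFrobenius L p m
      commutes' := fun a => by show iterateFrobenius L p m _ = _; rw [iterateFrobenius_def]; exact hfix a }
  have hA : ∀ x : L, A x = x ^ p ^ m := fun x => iterateFrobenius_def p m x
  have hbij : Function.Bijective A :=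
    Finite.injective_iff_bijective.mp (A.toRingHom.injective)
  exact ⟨AlgEquiv.ofBijective A hbij, hA⟩

lemma norm_eq_pow_sum (F L : Type*) [Field F] [Field L] [Fintype F] [Fintype L] [Algebra F L]
    (x : L) :
    algebraMap F L (Algebra.norm F x)
      = x ^ (∑ i ∈ Finset.range (Module.finrank F L), Fintype.card F ^ i) := by
  classical
  set Q := Fintype.card F with hQdef
  set n := Module.finrank F L with hndef
  set p := ringChar F with hpdef
  haveI : CharP F p := ringChar.charP F
  haveI : Fact p.Prime := ⟨CharP.char_is_prime F p⟩
  haveI : CharP L p := charP_of_injective_ringHom (algebraMap F L).injective p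
  obtain ⟨m, -, hQ⟩ := FiniteField.card F p
  have hfix : ∀ a : F, algebraMap F L a ^ p ^ (m : ℕ) = algebraMap F L a := by
    intro a
    rw [← map_pow, ← hQ, FiniteField.pow_card]
  obtain ⟨φ, hφ⟩ := exists_frob F L p (m : ℕ) hfix
  have hφQ : ∀ y : L, φ y = y ^ Q := by intro y; rw [hφ, hQdef, hQ]
  have hiter : ∀ (i : ℕ) (y : L), (φ ^ i) y = y ^ Q ^ i := by
    intro i
    induction i with
    | zero => intro y; simp
    | succ i ih =>
      intro y
      rw [pow_succ, AlgEquiv.mul_apply, ih, hφQ, ← pow_mul, pow_succ, mul_comm]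
  have hQ2 : 2 ≤ Q := Fintype.one_lt_card
  have hn1 : 1 ≤ n := Module.finrank_pos
  have hcardL : Fintype.card L = Q ^ n := Module.card_eq_pow_finrank
  have hpow_n : φ ^ n = 1 := by
    ext y
    rw [hiter, ← hcardL, FiniteField.pow_card]
    rfl
  have hd_dvd : orderOf φ ∣ n := orderOf_dvd_of_pow_eq_one hpow_n
  obtain ⟨g, hg⟩ := IsCyclic.exists_generator (α := Lˣ)
  have hog : orderOf g = Fintype.card Lˣ := by
    rw [(orderOf_eq_card_of_forall_mem_zpowers hg :), Nat.card_eq_fintype_card]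
  have hcardU : Fintype.card Lˣ = Q ^ n - 1 := by rw [Fintype.card_units, hcardL]
  have hd_pos : 0 < orderOf φ := orderOf_pos φ
  have h1 : (g : L) ^ Q ^ orderOf φ = (g : L) := by
    calc (g : L) ^ Q ^ orderOf φ = (φ ^ orderOf φ) (g : L) := (hiter _ _).symm
    _ = (g : L) := by rw [pow_orderOf_eq_one φ]; rfl
  have hge : 1 ≤ Q ^ orderOf φ := Nat.one_le_pow _ _ (by omega)
  have h2 : g ^ (Q ^ orderOf φ - 1) = 1 := by
    have h1' : g ^ Q ^ orderOf φ = g := Units.ext (by rw [Units.val_pow_eq_pow_val]; exact h1)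
    have hmul : g ^ (Q ^ orderOf φ - 1) * g = g ^ (Q ^ orderOf φ) := by
      rw [← pow_succ]; congr 1; omega
    have : g ^ (Q ^ orderOf φ - 1) * g = 1 * g := by rw [hmul, h1', one_mul]
    exact mul_right_cancel this
  have hdvd : Q ^ n - 1 ∣ Q ^ orderOf φ - 1 := by
    rw [← hcardU, ← hog]; exact orderOf_dvd_of_pow_eq_one h2
  have hle : n ≤ orderOf φ := by
    have hQd : Q ≤ Q ^ orderOf φ := Nat.le_self_pow (by omega) Q
    have h3 := Nat.le_of_dvd (by omega) hdvd
    have h1n : 1 ≤ Q ^ n := Nat.one_le_pow _ _ (by omega)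
    have hpow_le : Q ^ n ≤ Q ^ orderOf φ := by omega
    exact (Nat.pow_le_pow_iff_right (by omega)).mp hpow_le
  have hord : orderOf φ = n := le_antisymm (Nat.le_of_dvd (by omega) hd_dvd) hle
  have hb : Function.Bijective (fun i : Fin n => φ ^ (i : ℕ)) := by
    rw [Fintype.bijective_iff_injective_and_card]
    constructor
    · intro i j hij
      exact Fin.ext (pow_injOn_Iio_orderOf
        (by simp [Set.mem_Iio, hord, i.isLt]) (by simp [Set.mem_Iio, hord, j.isLt]) hij)
    · rw [Fintype.card_fin, ← Nat.card_eq_fintype_card, IsGalois.card_aut_eq_finrank]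
  rw [Algebra.norm_eq_prod_automorphisms]
  rw [← Function.Bijective.prod_comp hb (fun σ => σ x)]
  simp only [hiter]
  rw [Finset.prod_pow_eq_pow_sum]
  congr 1
  exact Fin.sum_univ_eq_sum_range _ n

lemma norm_units_surjective (F L : Type*) [Field F] [Field L] [Fintype F] [Fintype L]
    [Algebra F L] :
    Function.Surjective (Units.map (Algebra.norm F : L →* F)) := by
  classical
  set Q := Fintype.card F with hQdef
  set n := Module.finrank F L with hndef
  set s := ∑ i ∈ Finset.range n, Q ^ i with hsdef
  have hQ2 : 2 ≤ Q := Fintype.one_lt_card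
  have hn1 : 1 ≤ n := Module.finrank_pos
  have hs_pos : 0 < s :=
    Finset.sum_pos (fun i _ => pow_pos (by omega) i)
      (Finset.nonempty_range_iff.mpr (by omega))
  have hgeom := geom_nat Q n (by omega)
  rw [← hsdef] at hgeom
  have hcardL : Fintype.card L = Q ^ n := Module.card_eq_pow_finrank
  have hcardU : Fintype.card Lˣ = Q ^ n - 1 := by rw [Fintype.card_units, hcardL]
  have h1n : 1 ≤ Q ^ n := Nat.one_le_pow _ _ (by omega)
  have hM : Fintype.card Lˣ = (Q - 1) * s := by omega
  obtain ⟨g, hg⟩ := IsCyclic.exists_generator (α := Lˣ)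
  have hog : orderOf g = Fintype.card Lˣ := by
    rw [(orderOf_eq_card_of_forall_mem_zpowers hg :), Nat.card_eq_fintype_card]
  set Nm := Units.map (Algebra.norm F : L →* F) with hNm
  set j : Fˣ →* Lˣ := Units.map (algebraMap F L : F →+* L).toMonoidHom with hj
  have jinj : Function.Injective j := Units.map_injective ((algebraMap F L).injective)
  have hkey : ∀ u : Lˣ, j (Nm u) = u ^ s := by
    intro u
    apply Units.ext
    simp only [hj, hNm, Units.coe_map, Units.val_pow_eq_pow_val,
      RingHom.toMonoidHom_eq_coe, MonoidHom.coe_coe]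
    exact norm_eq_pow_sum F L (u : L)
  have hsdvd : s ∣ orderOf g := by rw [hog, hM]; exact dvd_mul_left s (Q - 1)
  have hordN : orderOf (Nm g) = Fintype.card Fˣ := by
    have horj := orderOf_injective j jinj (Nm g)
    rw [← horj, hkey, orderOf_pow, Nat.gcd_eq_right hsdvd, hog, hM,
      Nat.mul_div_cancel _ hs_pos, Fintype.card_units]
  have htop : Subgroup.zpowers (Nm g) = ⊤ := by
    apply Subgroup.eq_top_of_card_eq
    rw [Nat.card_zpowers, hordN, Nat.card_eq_fintype_card]
  intro y
  have hy : y ∈ Subgroup.zpowers (Nm g) := htop ▸ Subgroup.mem_top y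
  obtain ⟨k, hk⟩ := hy
  exact ⟨g ^ k, by rw [map_zpow]; exact hk⟩

/-- For an extension `L/K` of finite fields and a character `χ : Lˣ → ℂˣ`, there is a
unique character `χreg` of `K[χ]ˣ` (where `K[χ]` is the stabilizer field of `χ`) such
that `χ = χreg ∘ N_{L/K[χ]}` and `χreg` is `K`-regular, i.e. the stabilizer of `χreg`
in `Gal(K[χ]/K)` under precomposition is trivial. -/
theorem statement0 (K L : Type) [Field K] [Field L] [Fintype K] [Fintype L]
    [Algebra K L] (χ : Lˣ →* ℂˣ) :
    ∃! χreg : (↥(stabField K L χ))ˣ →* ℂˣ,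
      χ = χreg.comp
          (Units.map (Algebra.norm ↥(stabField K L χ) : L →* ↥(stabField K L χ))) ∧
      ∀ σ : ↥(stabField K L χ) ≃ₐ[K] ↥(stabField K L χ),
        (∀ y : (↥(stabField K L χ))ˣ,
          χreg (Units.map (σ : ↥(stabField K L χ) →* ↥(stabField K L χ)) y) = χreg y) →
        σ = 1 := by
  classical
  haveI : Fintype ↥(stabField K L χ) := Fintype.ofFinite _
  set F := stabField K L χ with hFdef
  set Nm : Lˣ →* (↥F)ˣ := Units.map (Algebra.norm ↥F : L →* ↥F) with hNmdef
  have hNsurj : Function.Surjective Nm := norm_units_surjective ↥F L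
  set Q := Fintype.card ↥F with hQdef
  set n := Module.finrank ↥F L with hndef
  set s := ∑ i ∈ Finset.range n, Q ^ i with hsdef
  have hQ2 : 2 ≤ Q := Fintype.one_lt_card
  have hn1 : 1 ≤ n := Module.finrank_pos
  have hs_pos : 0 < s :=
    Finset.sum_pos (fun i _ => pow_pos (by omega) i)
      (Finset.nonempty_range_iff.mpr (by omega))
  have hgeom := geom_nat Q n (by omega)
  rw [← hsdef] at hgeom
  have hcardL : Fintype.card L = Q ^ n := Module.card_eq_pow_finrank
  have hcardU : Fintype.card Lˣ = Q ^ n - 1 := by rw [Fintype.card_units, hcardL]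
  have h1n : 1 ≤ Q ^ n := Nat.one_le_pow _ _ (by omega)
  have hM : Fintype.card Lˣ = (Q - 1) * s := by omega
  -- elements of F are fixed by the Q-power map
  have hFfix : ∀ z : L, z ∈ F → z ^ Q = z := by
    intro z hz
    lift z to ↥F using hz
    have h := FiniteField.pow_card z
    calc ((z : L)) ^ Q = ((z ^ Q : ↥F) : L) := by norm_cast
    _ = (z : L) := by rw [h]
  -- the Frobenius x ↦ x ^ Q as a K-algebra automorphism of L
  set p := ringChar ↥F with hpdef
  haveI : CharP ↥F p := ringChar.charP ↥F
  haveI : Fact p.Prime := ⟨CharP.char_is_prime ↥F p⟩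
  haveI : CharP L p := charP_of_injective_ringHom (algebraMap ↥F L).injective p
  obtain ⟨m, -, hQp⟩ := FiniteField.card ↥F p
  have hfixK : ∀ a : K, algebraMap K L a ^ p ^ (m : ℕ) = algebraMap K L a := by
    intro a
    rw [← hQp]
    exact hFfix _ (F.algebraMap_mem a)
  obtain ⟨fr, hfr⟩ := exists_frob K L p (m : ℕ) hfixK
  have hfrQ : ∀ x : L, fr x = x ^ Q := by intro x; rw [hfr, hQdef, hQp]
  -- Galois correspondence
  have hfix_eq : F.fixingSubgroup = charStab K L χ :=
    IntermediateField.fixingSubgroup_fixedField (charStab K L χ)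
  have hfr_mem : fr ∈ charStab K L χ := by
    rw [← hfix_eq, IntermediateField.mem_fixingSubgroup_iff]
    intro x hx
    rw [hfrQ]
    exact hFfix x hx
  have hχfr : ∀ v : Lˣ, χ (Units.map (fr : L →* L) v) = χ v := hfr_mem
  -- the kernel of the norm is contained in the kernel of χ
  have hker : Nm.ker ≤ χ.ker := by
    intro u hu
    rw [MonoidHom.mem_ker] at hu ⊢
    have hus : u ^ s = 1 := by
      apply Units.ext
      show ((u ^ s : Lˣ) : L) = ((1 : Lˣ) : L)
      rw [Units.val_pow_eq_pow_val, Units.val_one, ← norm_eq_pow_sum ↥F L (u : L),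
        show Algebra.norm ↥F ((u : Lˣ) : L) = ((Nm u : (↥F)ˣ) : ↥F) from
          (Units.coe_map _ u).symm,
        hu, Units.val_one, map_one]
    obtain ⟨g, hg⟩ := IsCyclic.exists_generator (α := Lˣ)
    have hog : orderOf g = Fintype.card Lˣ := by
      rw [(orderOf_eq_card_of_forall_mem_zpowers hg :), Nat.card_eq_fintype_card]
    obtain ⟨k, hk⟩ := (mem_powers_iff_mem_zpowers).mpr (hg u)
    have hdvd : Fintype.card Lˣ ∣ k * s := by
      rw [← hog]
      apply orderOf_dvd_of_pow_eq_one
      have hk' : g ^ k = u := hk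
      rw [pow_mul, hk', hus]
    rw [hM] at hdvd
    obtain ⟨k', rfl⟩ := (Nat.mul_dvd_mul_iff_right hs_pos).mp hdvd
    set v := g ^ k' with hv
    have huv : u = v ^ (Q - 1) := by
      rw [hv, ← pow_mul, mul_comm k' (Q - 1)]
      exact hk.symm
    have hvQ : Units.map (fr : L →* L) v = v ^ Q := by
      apply Units.ext
      simp only [Units.coe_map, Units.val_pow_eq_pow_val, MonoidHom.coe_coe]
      exact hfrQ (v : L)
    have hχv : χ (v ^ Q) = χ v := by rw [← hvQ]; exact hχfr v
    have hQ1 : v ^ (Q - 1) * v = v ^ Q := by rw [← pow_succ]; congr 1; omega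
    have hmul : χ (v ^ (Q - 1)) * χ v = χ v := by rw [← map_mul, hQ1, hχv]
    rw [huv]
    exact mul_right_cancel (b := χ v) (by rw [hmul, one_mul])
  -- lift χ through the norm
  set f_inv := Function.surjInv hNsurj with hfinv
  have hri : Function.RightInverse f_inv Nm := Function.rightInverse_surjInv hNsurj
  set χreg := Nm.liftOfRightInverse f_inv hri ⟨χ, hker⟩ with hχregdef
  have hfact : ∀ x : Lˣ, χreg (Nm x) = χ x := fun x =>
    Nm.liftOfRightInverse_comp_apply f_inv hri ⟨χ, hker⟩ x
  refine ⟨χreg, ⟨?_, ?_⟩, ?_⟩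
  · ext x
    exact congrArg Units.val (hfact x).symm
  · -- regularity
    intro σ hσ
    obtain ⟨σ', hσ'⟩ := AlgEquiv.restrictNormalHom_surjective (K₁ := ↥F) (E := L) σ
    have hrn : ∀ b : ↥F, σ'.restrictNormal ↥F b = σ b := fun b => by rw [← hσ']; rfl
    have hnormcomm : ∀ x : L, Algebra.norm ↥F (σ' x) = σ (Algebra.norm ↥F x) := by
      intro x
      apply (algebraMap ↥F L).injective
      rw [norm_eq_pow_sum ↥F L (σ' x), ← map_pow σ' x, ← norm_eq_pow_sum ↥F L x,
        ← AlgEquiv.restrictNormal_commutes σ' ↥F (Algebra.norm ↥F x), hrn]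
    have hσ'mem : σ' ∈ charStab K L χ := by
      intro x
      calc χ (Units.map (σ' : L →* L) x)
          = χreg (Nm (Units.map (σ' : L →* L) x)) := (hfact _).symm
        _ = χreg (Units.map (σ : ↥F →* ↥F) (Nm x)) := by
            congr 1
            apply Units.ext
            simp only [hNmdef, Units.coe_map, MonoidHom.coe_coe]
            exact hnormcomm (x : L)
        _ = χreg (Nm x) := hσ (Nm x)
        _ = χ x := hfact x
    have hσ'fix : σ' ∈ F.fixingSubgroup := by rw [hfix_eq]; exact hσ'mem
    apply AlgEquiv.ext
    intro a
    apply (algebraMap ↥F L).injective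
    rw [AlgEquiv.one_apply, ← hrn a, AlgEquiv.restrictNormal_commutes σ' ↥F a]
    exact ((IntermediateField.mem_fixingSubgroup_iff F σ').mp hσ'fix) _ a.2
  · -- uniqueness
    rintro ψ ⟨hψ, -⟩
    ext y
    obtain ⟨x, rfl⟩ := hNsurj y
    exact congrArg Units.val ((DFunLike.congr_fun hψ x).symm.trans (hfact x).symm)
end

section
/- Let L/K be an extension of finite fields and let χ : Lˣ → ℂˣ be a character. Then χ ∘ σ = χ for every σ ∈ Gal(L/K) if and only if there exists a character χ₀ : Kˣ → ℂˣ with χ = χ₀ ∘ N_{L/K}; moreover, when it exists, such a character χ₀ is unique. -/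
open Finset

section Aux

variable (K L : Type) [Field K] [Field L] [Fintype K] [Fintype L] [Algebra K L]

open scoped Classical




/-- The Frobenius `x ↦ x ^ |K|` as a `K`-algebra homomorphism. -/
def frobHomAux : L →ₐ[K] L where
  toFun x := x ^ Fintype.card K
  map_one' := one_pow _
  map_mul' x y := mul_pow x y _
  map_zero' := zero_pow Fintype.card_ne_zero
  map_add' x y := by
    obtain ⟨p, hp⟩ := CharP.exists K
    haveI := hp
    haveI : CharP L p := charP_of_injective_algebraMap' (A := L) K p
    obtain ⟨n, hpp, hcard⟩ := FiniteField.card K p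
    haveI : Fact p.Prime := ⟨hpp⟩
    rw [hcard]
    exact add_pow_char_pow x y p n
  commutes' a := by
    show (algebraMap K L a) ^ Fintype.card K = algebraMap K L a
    rw [← map_pow, FiniteField.pow_card]

/-- The Frobenius `x ↦ x ^ |K|` as a `K`-algebra automorphism. -/
noncomputable def frobAux : L ≃ₐ[K] L :=
  AlgEquiv.ofBijective (frobHomAux K L)
    ((Finite.injective_iff_bijective).mp (frobHomAux K L).toRingHom.injective)

lemma frobAux_apply (x : L) : frobAux K L x = x ^ Fintype.card K := rfl

lemma frobAux_pow_apply (i : ℕ) (x : L) :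
    (frobAux K L ^ i) x = x ^ Fintype.card K ^ i := by
  induction i with
  | zero => simp
  | succ i ih =>
    rw [pow_succ, AlgEquiv.mul_apply, frobAux_apply, map_pow, ih, ← pow_mul, ← pow_succ]





lemma geomAux (q : ℕ) (hq : 1 ≤ q) : ∀ n : ℕ, (q - 1) * (∑ i ∈ range n, q ^ i) + 1 = q ^ n := by
  intro n
  induction n with
  | zero => simp
  | succ n ih =>
    rw [sum_range_succ, Nat.mul_add, pow_succ, mul_comm (q ^ n) q]
    have : (q - 1) * q ^ n + q ^ n = q * q ^ n := by
      rw [Nat.sub_one_mul]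
      have : q ^ n ≤ q * q ^ n := Nat.le_mul_of_pos_left _ (by omega)
      omega
    omega


lemma orderOf_frobAux : orderOf (frobAux K L) = Module.finrank K L := by
  set q := Fintype.card K with hqdef
  set n := Module.finrank K L with hndef
  have hq : 1 < q := Fintype.one_lt_card
  have hn0 : 0 < n := Module.finrank_pos
  have hcardL : Fintype.card L = q ^ n := Module.card_eq_pow_finrank
  have h1 : frobAux K L ^ n = 1 := by
    ext x
    rw [frobAux_pow_apply, ← hcardL, FiniteField.pow_card]
    rfl
  have hd := orderOf_dvd_of_pow_eq_one h1
  set d := orderOf (frobAux K L) with hddef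
  have hd0 : 0 < d := orderOf_pos _
  obtain ⟨g, hg⟩ := IsCyclic.exists_generator (α := Lˣ)
  have hog : orderOf g = q ^ n - 1 := by
    rw [orderOf_eq_card_of_forall_mem_zpowers hg, Nat.card_eq_fintype_card, Fintype.card_units, hcardL]
  -- from frob ^ d = 1 applied to g we get q^n - 1 ∣ q^d - 1
  have hgd : (g : L) ^ q ^ d = (g : L) := by
    have := congrArg (fun σ : L ≃ₐ[K] L => σ (g : L)) (pow_orderOf_eq_one (frobAux K L))
    simp only [frobAux_pow_apply, AlgEquiv.one_apply] at this
    exact this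
  have hgu : g ^ (q ^ d - 1) = 1 := by
    have h2 : g ^ q ^ d = g := by
      ext
      push_cast
      exact hgd
    have h3 : g ^ (q ^ d - 1) * g = g := by
      rw [← pow_succ]
      have : q ^ d - 1 + 1 = q ^ d := by
        have : 1 ≤ q ^ d := Nat.one_le_pow _ _ (by omega)
        omega
      rw [this, h2]
    exact mul_right_cancel (h3.trans (one_mul g).symm)
  have hdvd : q ^ n - 1 ∣ q ^ d - 1 := hog ▸ orderOf_dvd_of_pow_eq_one hgu
  have hle : q ^ n ≤ q ^ d := by
    have h1' : 0 < q ^ d - 1 := by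
      have : q ^ 1 ≤ q ^ d := Nat.pow_le_pow_right (by omega) hd0
      simp only [pow_one] at this
      omega
    have := Nat.le_of_dvd h1' hdvd
    have h2' : 1 ≤ q ^ n := Nat.one_le_pow _ _ (by omega)
    omega
  have : n ≤ d := (Nat.pow_le_pow_iff_right hq).mp hle
  exact Nat.le_antisymm (Nat.le_of_dvd hn0 hd) this


lemma algebraMap_norm_eq (x : L) :
    algebraMap K L (Algebra.norm K x) =
      x ^ ∑ i ∈ range (Module.finrank K L), Fintype.card K ^ i := by
  set q := Fintype.card K
  set n := Module.finrank K L with hndef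
  have hn0 : 0 < n := Module.finrank_pos
  rw [Algebra.norm_eq_prod_automorphisms, ← Finset.prod_pow_eq_pow_sum]
  have hcardG : Fintype.card (L ≃ₐ[K] L) = n := by rw [← Nat.card_eq_fintype_card]; exact IsGalois.card_aut_eq_finrank K L
  have horder : orderOf (frobAux K L) = n := orderOf_frobAux K L
  refine (Finset.prod_bij (fun i _ => frobAux K L ^ i) (fun i _ => mem_univ _) ?_ ?_ ?_).symm
  · intro a ha b hb hab
    exact pow_injOn_Iio_orderOf (by simpa [horder] using mem_range.mp ha)
      (by simpa [horder] using mem_range.mp hb) hab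
  · intro σ _
    have htop : Subgroup.zpowers (frobAux K L) = ⊤ := by
      apply Subgroup.eq_top_of_card_eq
      rw [Nat.card_zpowers, horder, Nat.card_eq_fintype_card, hcardG]
    have hmem : σ ∈ Subgroup.zpowers (frobAux K L) := by rw [htop]; trivial
    obtain ⟨k, hk⟩ := (Submonoid.mem_powers_iff _ _).mp
      ((mem_powers_iff_mem_zpowers).mpr hmem)
    exact ⟨k % n, mem_range.mpr (Nat.mod_lt _ hn0), by show frobAux K L ^ (k % n) = σ; rw [← horder, pow_mod_orderOf, hk]⟩
  · intro i _
    rw [frobAux_pow_apply]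

omit [Fintype K] in
lemma norm_algEquiv_apply (σ : L ≃ₐ[K] L) (x : L) :
    Algebra.norm K (σ x) = Algebra.norm K x := by
  apply (algebraMap K L).injective
  rw [Algebra.norm_eq_prod_automorphisms, Algebra.norm_eq_prod_automorphisms]
  exact Fintype.prod_equiv (Equiv.mulRight σ) _ _ (fun τ => rfl)

lemma units_norm_eq (u : Lˣ) :
    Units.map (algebraMap K L : K →* L) (Units.map (Algebra.norm K : L →* K) u) =
      u ^ ∑ i ∈ range (Module.finrank K L), Fintype.card K ^ i := by
  ext
  push_cast
  exact algebraMap_norm_eq K L (u : L)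

end Aux



/-- Let `L/K` be an extension of finite fields and `χ : Lˣ → ℂˣ` a character. Then
`χ ∘ σ = χ` for every `σ ∈ Gal(L/K)` if and only if there is a character
`χ₀ : Kˣ → ℂˣ` with `χ = χ₀ ∘ N_{L/K}`; moreover such a `χ₀`, when it exists, is
unique. -/
theorem statement2 (K L : Type) [Field K] [Field L] [Fintype K] [Fintype L]
    [Algebra K L] (χ : Lˣ →* ℂˣ) :
    ((∀ σ : L ≃ₐ[K] L, χ.comp (Units.map (σ : L →* L)) = χ) ↔
      ∃ χ₀ : Kˣ →* ℂˣ, χ = χ₀.comp (Units.map (Algebra.norm K : L →* K))) ∧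
    ∀ χ₀ χ₁ : Kˣ →* ℂˣ,
      χ = χ₀.comp (Units.map (Algebra.norm K : L →* K)) →
      χ = χ₁.comp (Units.map (Algebra.norm K : L →* K)) → χ₀ = χ₁ := by
  classical
  set q := Fintype.card K with hqdef
  set n := Module.finrank K L with hndef
  set s := ∑ i ∈ range n, q ^ i with hsdef
  have hq : 1 < q := Fintype.one_lt_card
  have hn0 : 0 < n := Module.finrank_pos
  have hgeom : (q - 1) * s + 1 = q ^ n := geomAux q (by omega) n
  have hs0 : 0 < s := by
    have h0 : (0:ℕ) ∈ range n := mem_range.mpr hn0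
    have := Finset.single_le_sum (f := fun i => q ^ i) (fun i _ => Nat.zero_le _) h0
    simp at this
    exact this
  set N : Lˣ →* Kˣ := Units.map (Algebra.norm K : L →* K) with hNdef
  set ι : Kˣ →* Lˣ := Units.map (algebraMap K L : K →* L) with hιdef
  have hι : Function.Injective ι := Units.map_injective (algebraMap K L).injective
  have hNs : ∀ u : Lˣ, ι (N u) = u ^ s := fun u => units_norm_eq K L u
  obtain ⟨g, hg⟩ := IsCyclic.exists_generator (α := Lˣ)
  have hcardL : Fintype.card L = q ^ n := Module.card_eq_pow_finrank
  have hog : orderOf g = q ^ n - 1 := by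
    rw [orderOf_eq_card_of_forall_mem_zpowers hg, Nat.card_eq_fintype_card,
      Fintype.card_units, hcardL]
  -- surjectivity of the norm on units
  have horderNg : orderOf (N g) = q - 1 := by
    have h1 : orderOf (ι (N g)) = orderOf (N g) := orderOf_injective ι hι (N g)
    rw [← h1, hNs, orderOf_pow, hog]
    have hgcd : Nat.gcd (q ^ n - 1) s = s :=
      Nat.gcd_eq_right ⟨q - 1, by rw [Nat.mul_comm]; omega⟩
    rw [hgcd, show q ^ n - 1 = s * (q - 1) by rw [Nat.mul_comm]; omega,
      Nat.mul_div_cancel_left _ hs0]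
  have hNsurj : Function.Surjective N := by
    intro k
    have htop : Subgroup.zpowers (N g) = ⊤ := by
      apply Subgroup.eq_top_of_card_eq
      rw [Nat.card_zpowers, horderNg, Nat.card_eq_fintype_card, Fintype.card_units]
    have hmem : k ∈ Subgroup.zpowers (N g) := by rw [htop]; trivial
    obtain ⟨j, hj⟩ := (Submonoid.mem_powers_iff _ _).mp ((mem_powers_iff_mem_zpowers).mpr hmem)
    exact ⟨g ^ j, by rw [map_pow, hj]⟩
  refine ⟨⟨fun hinv => ?_, ?_⟩, fun χ₀ χ₁ h0 h1 => ?_⟩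
  · -- invariant characters factor through the norm
    have hker : ∀ u : Lˣ, u ∈ N.ker → χ u = 1 := by
      intro u hu
      rw [MonoidHom.mem_ker] at hu
      have hus : u ^ s = 1 := by
        rw [← hNs u, hu, map_one]
      obtain ⟨j, hj⟩ := (Submonoid.mem_powers_iff _ _).mp ((mem_powers_iff_mem_zpowers).mpr (hg u))
      have hdvdjs : orderOf g ∣ j * s := orderOf_dvd_of_pow_eq_one (by rw [pow_mul, hj, hus])
      rw [hog] at hdvdjs
      have hdvd : (q - 1) ∣ j := by
        have h2 : (q - 1) * s ∣ j * s := by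
          rwa [show q ^ n - 1 = (q - 1) * s by omega] at hdvdjs
        exact (Nat.mul_dvd_mul_iff_right hs0).mp h2
      obtain ⟨t, ht⟩ := hdvd
      have huy : u = (g ^ t) ^ (q - 1) := by
        rw [← hj, ht, ← pow_mul, Nat.mul_comm]
      -- χ is trivial on (q-1)-st powers thanks to Frobenius invariance
      set y := g ^ t
      have hfrob : χ (y ^ q) = χ y := by
        have h := hinv (frobAux K L)
        have hv : Units.map ((frobAux K L : L ≃ₐ[K] L) : L →* L) y = y ^ q := by
          ext
          push_cast
          rfl
        calc χ (y ^ q) = χ (Units.map ((frobAux K L : L ≃ₐ[K] L) : L →* L) y) := by rw [hv]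
        _ = χ y := DFunLike.congr_fun h y
      have hysplit : y ^ q = y ^ (q - 1) * y := by
        rw [← pow_succ]
        congr 1
        omega
      rw [huy, ← mul_left_cancel_iff (a := χ y), mul_one]
      calc χ y * χ (y ^ (q - 1)) = χ (y ^ (q - 1)) * χ y := mul_comm _ _
      _ = χ (y ^ (q - 1) * y) := (map_mul χ _ _).symm
      _ = χ (y ^ q) := by rw [← hysplit]
      _ = χ y := hfrob
    let e : Lˣ ⧸ N.ker ≃* Kˣ := QuotientGroup.quotientKerEquivOfSurjective N hNsurj
    refine ⟨(QuotientGroup.lift N.ker χ (by intro u hu; exact (MonoidHom.mem_ker).mpr (hker u hu))).comp e.symm.toMonoidHom, ?_⟩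
    ext u
    have he : e (QuotientGroup.mk u) = N u := rfl
    have he' : e.symm (N u) = QuotientGroup.mk u := by
      rw [← he, MulEquiv.symm_apply_apply]
    simp only [MonoidHom.comp_apply, MulEquiv.coe_toMonoidHom]
    rw [he', QuotientGroup.lift_mk']
  · -- characters factoring through the norm are invariant
    rintro ⟨χ₀, rfl⟩ σ
    ext u
    have hNσ : N (Units.map (σ : L →* L) u) = N u := by
      ext
      exact norm_algEquiv_apply K L σ (u : L)
    simp only [MonoidHom.comp_apply, hNσ]
  · -- uniqueness
    ext k
    obtain ⟨u, rfl⟩ := hNsurj k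
    have e0 := DFunLike.congr_fun h0 u
    have e1 := DFunLike.congr_fun h1 u
    simp only [MonoidHom.comp_apply] at e0 e1
    rw [← e0, ← e1]
end

section
/- Let L/K be an extension of finite fields and let T denote the image of Lˣ in G = (End_K(L))ˣ under the embedding sending x to multiplication by x. Then: (a) for every g in the normalizer of T in G there exists a unique field automorphism σ_g ∈ Gal(L/K) such that g ∘ (multiplication by x) ∘ g⁻¹ = (multiplication by σ_g(x)) for all x ∈ Lˣ; (b) the map g ↦ σ_g is a surjective group homomorphism from the normalizer of T onto Gal(L/K) with kernel exactly T. In particular, the quotient of the normalizer of T by T is cyclic of order [L:K]. -/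
/-- The embedding of `Lˣ` into the unit group of `End_K(L)` sending `x` to
multiplication by `x`. -/
noncomputable def mulUnits (K L : Type) [Field K] [Field L] [Algebra K L] :
    Lˣ →* (Module.End K L)ˣ :=
  Units.map (Algebra.lmul K L : L →* Module.End K L)

/-- The image `T` of `Lˣ` in `G = (End_K(L))ˣ` (a maximal elliptic torus). -/
noncomputable def torus (K L : Type) [Field K] [Field L] [Algebra K L] :
    Subgroup (Module.End K L)ˣ :=
  (mulUnits K L).range

section Aux

variable {K L : Type} [Field K] [Field L] [Algebra K L]

lemma mulUnits_val (x : Lˣ) :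
    ((mulUnits K L x : (Module.End K L)ˣ) : Module.End K L) = Algebra.lmul K L (x : L) := rfl

lemma lmul_injective : Function.Injective (Algebra.lmul K L) := by
  intro a b h
  simpa using LinearMap.congr_fun h 1

lemma mulUnits_injective : Function.Injective (mulUnits K L) := by
  intro x y h
  have h2 := congrArg Units.val h
  exact Units.ext (lmul_injective h2)

lemma conj_mul_conj {M : Type*} [Monoid M] (g : Mˣ) (A B : M) :
    ((g : M) * A * ((g⁻¹ : Mˣ) : M)) * ((g : M) * B * ((g⁻¹ : Mˣ) : M))
      = (g : M) * (A * B) * ((g⁻¹ : Mˣ) : M) := by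
  have h1 : ((g⁻¹ : Mˣ) : M) * (g : M) = 1 := by
    rw [← Units.val_mul, inv_mul_cancel, Units.val_one]
  calc ((g : M) * A * ((g⁻¹ : Mˣ) : M)) * ((g : M) * B * ((g⁻¹ : Mˣ) : M))
      = (g : M) * A * ((((g⁻¹ : Mˣ) : M) * (g : M)) * (B * ((g⁻¹ : Mˣ) : M))) := by
        simp only [mul_assoc]
    _ = (g : M) * (A * B) * ((g⁻¹ : Mˣ) : M) := by
        rw [h1, one_mul]; simp only [mul_assoc]

lemma mulUnits_mem (x : Lˣ) : mulUnits K L x ∈ torus K L := ⟨x, rfl⟩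

lemma conj_mem_torus {g : (Module.End K L)ˣ} (hg : g ∈ (Subgroup.normalizer (torus K L : Set (Module.End K L)ˣ))) (x : Lˣ) :
    ∃ y : Lˣ, g * mulUnits K L x * g⁻¹ = mulUnits K L y := by
  obtain ⟨y, hy⟩ := (Subgroup.mem_normalizer_iff.mp hg (mulUnits K L x)).mp (mulUnits_mem x)
  exact ⟨y, hy.symm⟩

/-- the underlying function of `σ_g`. -/
noncomputable def sigmaFun (g : (Module.End K L)ˣ) (x : L) : L :=
  ((g : Module.End K L) * Algebra.lmul K L x * ((g⁻¹ : (Module.End K L)ˣ) : Module.End K L)) 1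

lemma conj_lmul {g : (Module.End K L)ˣ} (hg : g ∈ (Subgroup.normalizer (torus K L : Set (Module.End K L)ˣ))) (x : L) :
    (g : Module.End K L) * Algebra.lmul K L x * ((g⁻¹ : (Module.End K L)ˣ) : Module.End K L)
      = Algebra.lmul K L (sigmaFun g x) := by
  rcases eq_or_ne x 0 with rfl | hx
  · simp [sigmaFun]
  · obtain ⟨y, hy⟩ := conj_mem_torus hg (Units.mk0 x hx)
    have h2 := congrArg Units.val hy
    simp only [Units.val_mul, mulUnits_val, Units.val_mk0] at h2
    rw [h2]
    congr 1
    have h3 := LinearMap.congr_fun h2 1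
    simpa [sigmaFun] using h3.symm

end Aux

section Aux2

variable {K L : Type} [Field K] [Field L] [Algebra K L]

/-- `σ_g` as a ring homomorphism. -/
noncomputable def sigmaRing {g : (Module.End K L)ˣ} (hg : g ∈ (Subgroup.normalizer (torus K L : Set (Module.End K L)ˣ))) :
    L →+* L where
  toFun := sigmaFun g
  map_one' := by
    apply lmul_injective (K := K)
    rw [← conj_lmul hg, map_one, mul_one, ← Units.val_mul, mul_inv_cancel, Units.val_one]
  map_mul' x y := by
    apply lmul_injective (K := K)
    rw [← conj_lmul hg, map_mul, map_mul, ← conj_lmul hg, ← conj_lmul hg,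
      conj_mul_conj g (Algebra.lmul K L x) (Algebra.lmul K L y)]
  map_zero' := by
    apply lmul_injective (K := K)
    rw [← conj_lmul hg]
    simp
  map_add' x y := by
    apply lmul_injective (K := K)
    rw [← conj_lmul hg, map_add, map_add, ← conj_lmul hg, ← conj_lmul hg, mul_add, add_mul]

/-- `σ_g` as an algebra homomorphism. -/
noncomputable def sigmaAlgHom {g : (Module.End K L)ˣ} (hg : g ∈ (Subgroup.normalizer (torus K L : Set (Module.End K L)ˣ))) :
    L →ₐ[K] L where
  toRingHom := sigmaRing hg
  commutes' k := by
    show sigmaFun g (algebraMap K L k) = algebraMap K L k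
    apply lmul_injective (K := K)
    rw [← conj_lmul hg]
    have hc : Algebra.lmul K L (algebraMap K L k) = algebraMap K (Module.End K L) k := by
      ext z; simp [Algebra.smul_def]
    rw [hc, ← Algebra.commutes k (g : Module.End K L), mul_assoc, ← Units.val_mul,
      mul_inv_cancel, Units.val_one, mul_one]

/-- `σ_g` as a field automorphism of `L` over `K`. -/
noncomputable def sigmaEquiv [Fintype L] {g : (Module.End K L)ˣ}
    (hg : g ∈ (Subgroup.normalizer (torus K L : Set (Module.End K L)ˣ))) : L ≃ₐ[K] L :=
  haveI : FiniteDimensional K L := Module.Finite.of_finite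
  AlgEquiv.ofBijective (sigmaAlgHom hg) (sigmaAlgHom hg).bijective

lemma sigmaEquiv_apply [Fintype L] {g : (Module.End K L)ˣ}
    (hg : g ∈ (Subgroup.normalizer (torus K L : Set (Module.End K L)ˣ))) (x : L) : sigmaEquiv hg x = sigmaFun g x := rfl

lemma sigma_spec [Fintype L] {g : (Module.End K L)ˣ} (hg : g ∈ (Subgroup.normalizer (torus K L : Set (Module.End K L)ˣ)))
    (x : Lˣ) :
    g * mulUnits K L x * g⁻¹ = mulUnits K L (Units.map ((sigmaEquiv hg : L ≃ₐ[K] L) : L →* L) x) := by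
  apply Units.ext
  simp only [Units.val_mul, mulUnits_val, Units.coe_map, MonoidHom.coe_coe]
  rw [conj_lmul hg]
  rfl

lemma sigma_eq_of_spec [Fintype L] {g : (Module.End K L)ˣ} (hg : g ∈ (Subgroup.normalizer (torus K L : Set (Module.End K L)ˣ)))
    (τ : L ≃ₐ[K] L)
    (hτ : ∀ x : Lˣ, g * mulUnits K L x * g⁻¹ = mulUnits K L (Units.map (τ : L →* L) x)) :
    τ = sigmaEquiv hg := by
  ext z
  rcases eq_or_ne z 0 with rfl | hz
  · rw [map_zero, map_zero]
  · have h := (hτ (Units.mk0 z hz)).symm.trans (sigma_spec hg (Units.mk0 z hz))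
    have h2 := congrArg Units.val (mulUnits_injective h)
    simpa using h2

end Aux2

section Aux3

variable {K L : Type} [Field K] [Field L] [Algebra K L] [Fintype L]

/-- The map `g ↦ σ_g` as a group homomorphism from the normalizer of `T` to `Gal(L/K)`. -/
noncomputable def Phi (K L : Type) [Field K] [Field L] [Algebra K L] [Fintype L] :
    ↥(Subgroup.normalizer (torus K L : Set (Module.End K L)ˣ)) →* (L ≃ₐ[K] L) :=
  MonoidHom.mk' (fun g => sigmaEquiv g.2) (by
    intro g h
    refine (sigma_eq_of_spec (g * h).2 (sigmaEquiv g.2 * sigmaEquiv h.2) ?_).symm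
    intro x
    have hcoe : ((g * h : ↥(Subgroup.normalizer (torus K L : Set (Module.End K L)ˣ))) : (Module.End K L)ˣ)
        = (g : (Module.End K L)ˣ) * (h : (Module.End K L)ˣ) := rfl
    rw [hcoe, mul_inv_rev]
    calc (g : (Module.End K L)ˣ) * (h : (Module.End K L)ˣ) * mulUnits K L x
          * ((h : (Module.End K L)ˣ)⁻¹ * (g : (Module.End K L)ˣ)⁻¹)
        = (g : (Module.End K L)ˣ) * ((h : (Module.End K L)ˣ) * mulUnits K L x
            * (h : (Module.End K L)ˣ)⁻¹) * (g : (Module.End K L)ˣ)⁻¹ := by group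
      _ = (g : (Module.End K L)ˣ)
            * mulUnits K L (Units.map ((sigmaEquiv h.2 : L ≃ₐ[K] L) : L →* L) x)
            * (g : (Module.End K L)ˣ)⁻¹ := by rw [sigma_spec h.2 x]
      _ = mulUnits K L (Units.map ((sigmaEquiv g.2 : L ≃ₐ[K] L) : L →* L)
            (Units.map ((sigmaEquiv h.2 : L ≃ₐ[K] L) : L →* L) x)) := sigma_spec g.2 _
      _ = mulUnits K L (Units.map ((sigmaEquiv g.2 * sigmaEquiv h.2 : L ≃ₐ[K] L) : L →* L) x) := rfl)

lemma Phi_apply (g : ↥(Subgroup.normalizer (torus K L : Set (Module.End K L)ˣ))) : Phi K L g = sigmaEquiv g.2 := rfl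

/-- A field automorphism as a unit of the endomorphism algebra. -/
noncomputable def toEndUnits (σ : L ≃ₐ[K] L) : (Module.End K L)ˣ where
  val := σ.toLinearMap
  inv := σ.symm.toLinearMap
  val_inv := by ext z; simp [Module.End.mul_apply]
  inv_val := by ext z; simp [Module.End.mul_apply]

omit [Fintype L] in
lemma toEndUnits_inv (σ : L ≃ₐ[K] L) : (toEndUnits σ)⁻¹ = toEndUnits σ.symm :=
  Units.ext rfl

omit [Fintype L] in
lemma toEndUnits_conj (σ : L ≃ₐ[K] L) (x : Lˣ) :
    toEndUnits σ * mulUnits K L x * (toEndUnits σ)⁻¹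
      = mulUnits K L (Units.map (σ : L →* L) x) := by
  apply Units.ext
  apply LinearMap.ext
  intro z
  simp only [Units.val_mul, toEndUnits_inv, mulUnits_val, Units.coe_map, MonoidHom.coe_coe]
  show σ ((x : L) * σ.symm z) = σ (x : L) * z
  rw [map_mul, AlgEquiv.apply_symm_apply]

omit [Fintype L] in
lemma toEndUnits_mem (σ : L ≃ₐ[K] L) : toEndUnits σ ∈ (Subgroup.normalizer (torus K L : Set (Module.End K L)ˣ)) := by
  rw [Subgroup.mem_normalizer_iff]
  intro h
  constructor
  · rintro ⟨u, rfl⟩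
    exact ⟨Units.map (σ : L →* L) u, (toEndUnits_conj σ u).symm⟩
  · rintro ⟨v, hv⟩
    have h2 : h = (toEndUnits σ)⁻¹ * mulUnits K L v * toEndUnits σ := by
      rw [hv]; group
    have h3 : toEndUnits σ = (toEndUnits σ.symm)⁻¹ := by
      rw [toEndUnits_inv, AlgEquiv.symm_symm]
    rw [h2, toEndUnits_inv, h3]
    exact ⟨Units.map (σ.symm : L →* L) v, (toEndUnits_conj σ.symm v).symm⟩

lemma Phi_surjective : Function.Surjective (Phi K L) := by
  intro σ
  exact ⟨⟨toEndUnits σ, toEndUnits_mem σ⟩,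
    ((sigma_eq_of_spec (toEndUnits_mem σ) σ (toEndUnits_conj σ))).symm⟩

end Aux3

section Aux4

variable {K L : Type} [Field K] [Field L] [Algebra K L] [Fintype L]

set_option linter.unusedSectionVars false

lemma Phi_ker : (Phi K L).ker = (torus K L).subgroupOf (Subgroup.normalizer (torus K L : Set (Module.End K L)ˣ)) := by
  ext g
  rw [MonoidHom.mem_ker, Subgroup.mem_subgroupOf, Phi_apply]
  constructor
  · intro h1
    -- g commutes with every `lmul x`
    have hcomm : ∀ x : Lˣ, (g : (Module.End K L)ˣ) * mulUnits K L x
        = mulUnits K L x * (g : (Module.End K L)ˣ) := by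
      intro x
      have := sigma_spec g.2 x
      rw [h1] at this
      have h2 : mulUnits K L (Units.map (((1 : L ≃ₐ[K] L) : L ≃ₐ[K] L) : L →* L) x)
          = mulUnits K L x := rfl
      rw [h2] at this
      calc (g : (Module.End K L)ˣ) * mulUnits K L x
          = ((g : (Module.End K L)ˣ) * mulUnits K L x * (g : (Module.End K L)ˣ)⁻¹)
            * (g : (Module.End K L)ˣ) := by group
        _ = mulUnits K L x * (g : (Module.End K L)ˣ) := by rw [this]
    have key : ∀ y : L, ((g : (Module.End K L)ˣ) : Module.End K L) y
        = y * ((g : (Module.End K L)ˣ) : Module.End K L) 1 := by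
      intro y
      rcases eq_or_ne y 0 with rfl | hy
      · simp
      · have h3 := congrArg Units.val (hcomm (Units.mk0 y hy))
        simp only [Units.val_mul, mulUnits_val, Units.val_mk0] at h3
        have h4 := LinearMap.congr_fun h3 1
        simpa using h4
    set c : L := ((g : (Module.End K L)ˣ) : Module.End K L) 1 with hc
    have hcne : c ≠ 0 := by
      intro h0
      have h5 : (((g : (Module.End K L)ˣ)⁻¹ : (Module.End K L)ˣ) : Module.End K L)
          * ((g : (Module.End K L)ˣ) : Module.End K L) = 1 := by
        rw [← Units.val_mul, inv_mul_cancel, Units.val_one]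
      have h6 := LinearMap.congr_fun h5 1
      rw [Module.End.mul_apply, show ((g : (Module.End K L)ˣ) : Module.End K L) 1 = c from rfl,
        h0, map_zero, Module.End.one_apply] at h6
      exact one_ne_zero h6.symm
    refine ⟨Units.mk0 c hcne, ?_⟩
    apply Units.ext
    apply LinearMap.ext
    intro y
    rw [mulUnits_val, key y]
    show (Units.mk0 c hcne : L) * y = y * c
    rw [mul_comm]
    rfl
  · rintro ⟨u, hu⟩
    refine ((sigma_eq_of_spec g.2 1 ?_).symm)
    intro x
    rw [← hu, ← map_mul, mul_comm, map_mul]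
    have : mulUnits K L (Units.map (((1 : L ≃ₐ[K] L)) : L →* L) x) = mulUnits K L x := rfl
    rw [this, mul_inv_cancel_right]

end Aux4

section Aux5

variable (K L : Type) [Field K] [Field L] [Algebra K L] [Fintype K] [Fintype L]

lemma gal_isCyclic : IsCyclic (L ≃ₐ[K] L) := by
  haveI : FiniteDimensional K L := Module.Finite.of_finite
  obtain ⟨p, hc⟩ := CharP.exists K
  haveI : CharP K p := hc
  obtain ⟨m, hp, hcard⟩ := FiniteField.card K p
  haveI : Fact p.Prime := ⟨hp⟩
  haveI : CharP L p := charP_of_injective_algebraMap (algebraMap K L).injective p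
  set q := Fintype.card K with hq
  -- the relative Frobenius `x ↦ x ^ q`
  have hcommutes : ∀ k : K, iterateFrobenius L p m (algebraMap K L k) = algebraMap K L k := by
    intro k
    rw [iterateFrobenius_def, ← map_pow, ← hcard, FiniteField.pow_card]
  set φ : L →ₐ[K] L := { toRingHom := iterateFrobenius L p m, commutes' := hcommutes } with hφ
  set Φ : L ≃ₐ[K] L := AlgEquiv.ofBijective φ φ.bijective with hΦ
  have hΦapp : ∀ x : L, Φ x = x ^ q := by
    intro x
    show φ x = x ^ q
    show iterateFrobenius L p m x = x ^ q
    rw [iterateFrobenius_def, hcard]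
  have hpow : ∀ (j : ℕ) (x : L), (Φ ^ j) x = x ^ q ^ j := by
    intro j
    induction j with
    | zero => intro x; simp
    | succ n ih =>
      intro x
      rw [pow_succ, AlgEquiv.mul_apply, hΦapp x, ih, ← pow_mul, ← pow_succ']
  set d := Module.finrank K L with hd
  have hdpos : 0 < d := Module.finrank_pos
  have hcardGal : Nat.card (L ≃ₐ[K] L) = d := by
    rw [IsGalois.card_aut_eq_finrank]
  set j := orderOf Φ with hj
  have hjpos : 0 < j := orderOf_pos Φ
  have hjdvd : j ∣ d := by rw [← hcardGal, Nat.card_eq_fintype_card]; exact orderOf_dvd_card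
  -- lower bound on j via a generator of `Lˣ`
  obtain ⟨g, hg⟩ := IsCyclic.exists_generator (α := Lˣ)
  have hgq : (g : L) ^ q ^ j = (g : L) := by
    have h1 := hpow j (g : L)
    rw [pow_orderOf_eq_one Φ] at h1
    simpa using h1.symm
  have hq2 : 2 ≤ q := Fintype.one_lt_card
  have hqj1 : 1 ≤ q ^ j := Nat.one_le_pow _ _ (by omega)
  have hgu : g ^ (q ^ j - 1) = 1 := by
    have h2 : g ^ (q ^ j - 1 + 1) = g ^ 1 := by
      rw [Nat.sub_add_cancel hqj1, pow_one]
      apply Units.ext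
      rw [Units.val_pow_eq_pow_val]
      exact hgq
    rw [pow_succ] at h2
    rw [pow_one] at h2
    exact mul_right_cancel (h2.trans (one_mul g).symm)
  have horder : Nat.card L - 1 ∣ q ^ j - 1 := by
    have h3 := orderOf_dvd_of_pow_eq_one hgu
    rwa [orderOf_eq_card_of_forall_mem_zpowers hg, Nat.card_units] at h3
  have hcardL : Nat.card L = q ^ d := by
    rw [Nat.card_eq_fintype_card, Module.card_eq_pow_finrank (K := K) (V := L)]
  have hle : q ^ d ≤ q ^ j := by
    have hqle : q ≤ q ^ j := Nat.le_self_pow (by omega) q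
    have h4 : q ^ d - 1 ≤ q ^ j - 1 :=
      Nat.le_of_dvd (by omega) (hcardL ▸ horder)
    have h5 : 1 ≤ q ^ d := Nat.one_le_pow _ _ (by omega)
    omega
  have hdj : d ≤ j := (Nat.pow_le_pow_iff_right hq2).mp hle
  have hjd : j ≤ d := Nat.le_of_dvd hdpos hjdvd
  exact isCyclic_of_orderOf_eq_card Φ (by rw [hcardGal, ← hj]; omega)

end Aux5

/-- Let `L/K` be an extension of finite fields and `T` the image of `Lˣ` in
`G = (End_K(L))ˣ` under `x ↦ (multiplication by x)`. Then:
(a) every `g` in the normalizer of `T` induces a unique `σ_g ∈ Gal(L/K)` with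
`g ∘ (mult. by x) ∘ g⁻¹ = (mult. by σ_g x)` for all `x ∈ Lˣ`; and
(b) `g ↦ σ_g` is a surjective group homomorphism from the normalizer of `T` onto
`Gal(L/K)` with kernel exactly `T`; in particular the quotient of the normalizer
of `T` by `T` is cyclic of order `[L:K]`. -/
theorem statement9 (K L : Type) [Field K] [Field L] [Fintype K] [Fintype L]
    [Algebra K L] :
    (∀ g ∈ (Subgroup.normalizer (torus K L : Set (Module.End K L)ˣ)), ∃! σ : L ≃ₐ[K] L,
      ∀ x : Lˣ, g * mulUnits K L x * g⁻¹ = mulUnits K L (Units.map (σ : L →* L) x)) ∧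
    ∃ Φ : ↥(Subgroup.normalizer (torus K L : Set (Module.End K L)ˣ)) →* (L ≃ₐ[K] L),
      (∀ (g : ↥(Subgroup.normalizer (torus K L : Set (Module.End K L)ˣ))) (x : Lˣ),
        (g : (Module.End K L)ˣ) * mulUnits K L x * (g : (Module.End K L)ˣ)⁻¹ =
          mulUnits K L (Units.map ((Φ g : L ≃ₐ[K] L) : L →* L) x)) ∧
      Function.Surjective Φ ∧
      Φ.ker = (torus K L).subgroupOf (Subgroup.normalizer (torus K L : Set (Module.End K L)ˣ)) ∧
      IsCyclic (↥(Subgroup.normalizer (torus K L : Set (Module.End K L)ˣ)) ⧸ Φ.ker) ∧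
      Nat.card (↥(Subgroup.normalizer (torus K L : Set (Module.End K L)ˣ)) ⧸ Φ.ker) = Module.finrank K L := by
  haveI : FiniteDimensional K L := Module.Finite.of_finite
  constructor
  · intro g hg
    exact ⟨sigmaEquiv hg, sigma_spec hg, fun τ hτ => sigma_eq_of_spec hg τ hτ⟩
  · refine ⟨Phi K L, fun g x => sigma_spec g.2 x, Phi_surjective, Phi_ker, ?_, ?_⟩
    · haveI := gal_isCyclic K L
      have e := QuotientGroup.quotientKerEquivOfSurjective (Phi K L) Phi_surjective
      exact isCyclic_of_surjective e.symm e.symm.surjective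
    · have e := QuotientGroup.quotientKerEquivOfSurjective (Phi K L) Phi_surjective
      rw [Nat.card_congr e.toEquiv, IsGalois.card_aut_eq_finrank]
end
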